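/- Let v_1,...,v_{n-J} be orthonormal vectors in C^n and let φ(0) ≥ ... ≥ φ(n−J) > 0 be given. Then there exists b ∈ C^n with ‖b‖_2 = φ(0) and |⟨b, v_k⟩| = ψ(k) := sqrt(φ(k−1)^2 − φ(k)^2) for all k = 1,...,n−J; moreover any such b is linearly independent of v_1,...,v_{n-J}. -/

import Mathlib

private lemma norm_sum_sq_aux {N : ℕ} {E : Type*} [NormedAddCommGroup E]
    [InnerProductSpace ℂ E] {v : Fin N → E} (hv : Orthonormal ℂ v) (l : Fin N → ℂ) :
    ‖∑ i, l i • v i‖ ^ 2 = ∑ i, ‖l i‖ ^ 2 := by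
  have h := hv.inner_sum l l Finset.univ
  rw [inner_self_eq_norm_sq_to_K] at h
  have h2 : ((‖∑ i, l i • v i‖ ^ 2 : ℝ) : ℂ) = ((∑ i, ‖l i‖ ^ 2 : ℝ) : ℂ) := by
    push_cast
    refine h.trans (Finset.sum_congr rfl fun i _ => ?_)
    rw [RCLike.conj_mul]
    norm_cast
  exact_mod_cast h2

/-- Given orthonormal `v_1,...,v_{n-J}` and a nonincreasing sequence
`φ(0) ≥ ... ≥ φ(n−J) > 0`, there exists `b` with `‖b‖₂ = φ(0)` and
`|⟨b,v_k⟩| = ψ(k) = sqrt(φ(k−1)² − φ(k)²)` for all `k`; any such `b` is linearly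
independent of `v_1,...,v_{n-J}`. -/
theorem stmt13 (n J : ℕ) (hJ : 1 ≤ J) (hn : J < n)
    (v : Fin (n - J) → EuclideanSpace ℂ (Fin n)) (hv : Orthonormal ℂ v)
    (φ : ℕ → ℝ) (hmono : ∀ k, k < n - J → φ (k + 1) ≤ φ k) (hpos : 0 < φ (n - J)) :
    (∃ b : EuclideanSpace ℂ (Fin n), ‖b‖ = φ 0 ∧
      ∀ j : Fin (n - J),
        ‖(@inner ℂ _ _ (v j) b)‖ = Real.sqrt (φ (j : ℕ) ^ 2 - φ ((j : ℕ) + 1) ^ 2)) ∧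
    (∀ b : EuclideanSpace ℂ (Fin n), (‖b‖ = φ 0 ∧
      ∀ j : Fin (n - J),
        ‖(@inner ℂ _ _ (v j) b)‖ = Real.sqrt (φ (j : ℕ) ^ 2 - φ ((j : ℕ) + 1) ^ 2)) →
      b ∉ Submodule.span ℂ (Set.range v)) := by
  have hmlt : n - J < n := by omega
  have hchain : ∀ k l : ℕ, k ≤ l → l ≤ n - J → φ l ≤ φ k := by
    intro k l hkl
    induction l, hkl using Nat.le_induction with
    | base => intro _; exact le_refl _
    | succ l hkl ih =>
      intro h
      exact le_trans (hmono l (by omega)) (ih (by omega))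
  have hphi_pos : ∀ k, k ≤ n - J → 0 < φ k :=
    fun k hk => lt_of_lt_of_le hpos (hchain k (n - J) hk le_rfl)
  have hsq_nonneg : ∀ k, k < n - J → 0 ≤ φ k ^ 2 - φ (k + 1) ^ 2 := by
    intro k hk
    have h1 : φ (k + 1) ≤ φ k := hmono k hk
    have h2 : 0 ≤ φ (k + 1) := (hphi_pos (k + 1) (by omega)).le
    nlinarith
  set ψ : ℕ → ℝ := fun k => Real.sqrt (φ k ^ 2 - φ (k + 1) ^ 2) with hψ
  have hψsq : ∀ k, k < n - J → ψ k ^ 2 = φ k ^ 2 - φ (k + 1) ^ 2 := by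
    intro k hk
    exact Real.sq_sqrt (hsq_nonneg k hk)
  have hψnonneg : ∀ k, 0 ≤ ψ k := fun k => Real.sqrt_nonneg _
  have htel : ∑ j : Fin (n - J), (φ (j : ℕ) ^ 2 - φ ((j : ℕ) + 1) ^ 2)
      = φ 0 ^ 2 - φ (n - J) ^ 2 := by
    rw [← Finset.sum_range_sub' (fun i => φ i ^ 2) (n - J)]
    exact Fin.sum_univ_eq_sum_range (fun i => φ i ^ 2 - φ (i + 1) ^ 2) (n - J)
  set S : Submodule ℂ (EuclideanSpace ℂ (Fin n)) := Submodule.span ℂ (Set.range v) with hS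
  have hrankS : Module.finrank ℂ S = n - J :=
    (finrank_span_eq_card hv.linearIndependent).trans (Fintype.card_fin _)
  have hrank : Module.finrank ℂ S + Module.finrank ℂ Sᗮ = n := by
    rw [Submodule.finrank_add_finrank_orthogonal]
    simp [finrank_euclideanSpace_fin]
  obtain ⟨w0, hw0S, hw0⟩ : ∃ w0 ∈ Sᗮ, w0 ≠ 0 := by
    apply Submodule.exists_mem_ne_zero_of_ne_bot
    intro h
    rw [h, finrank_bot, hrankS] at hrank
    omega
  set w : EuclideanSpace ℂ (Fin n) := ‖w0‖⁻¹ • w0 with hwdef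
  have hwS : w ∈ Sᗮ := by rw [hwdef]; exact Sᗮ.smul_of_tower_mem _ hw0S
  have hw : ‖w‖ = 1 := by
    rw [hwdef, norm_smul]
    simp [norm_ne_zero_iff.mpr hw0]
  have hvw : ∀ j : Fin (n - J), (inner ℂ (v j) w : ℂ) = 0 := by
    intro j
    exact (Submodule.mem_orthogonal S w).mp hwS (v j) (Submodule.subset_span ⟨j, rfl⟩)
  set x : EuclideanSpace ℂ (Fin n) := ∑ k : Fin (n - J), (ψ (k : ℕ) : ℂ) • v k with hx
  set b : EuclideanSpace ℂ (Fin n) := x + (φ (n - J) : ℂ) • w with hb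
  have hxS : x ∈ S := Submodule.sum_mem _ fun k _ =>
    Submodule.smul_mem _ _ (Submodule.subset_span ⟨k, rfl⟩)
  have hinner : ∀ j : Fin (n - J), (inner ℂ (v j) b : ℂ) = (ψ (j : ℕ) : ℂ) := by
    intro j
    rw [hb, inner_add_right, inner_smul_right, hvw j, mul_zero, add_zero, hx,
      hv.inner_right_fintype]
  have hnormx : ‖x‖ ^ 2 = φ 0 ^ 2 - φ (n - J) ^ 2 := by
    rw [hx, norm_sum_sq_aux hv]
    rw [← htel]
    apply Finset.sum_congr rfl
    intro k _
    rw [Complex.norm_real, Real.norm_eq_abs, sq_abs, hψsq _ k.isLt]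
  have hnormb : ‖b‖ = φ 0 := by
    have hxy : (inner ℂ x ((φ (n - J) : ℂ) • w) : ℂ) = 0 :=
      (Submodule.mem_orthogonal S _).mp (Sᗮ.smul_mem _ hwS) x hxS
    have h2 : ‖b‖ ^ 2 = ‖x‖ ^ 2 + ‖(φ (n - J) : ℂ) • w‖ ^ 2 := by
      rw [hb, pow_two, pow_two, pow_two]
      exact norm_add_sq_eq_norm_sq_add_norm_sq_of_inner_eq_zero _ _ hxy
    have h3 : ‖(φ (n - J) : ℂ) • w‖ ^ 2 = φ (n - J) ^ 2 := by
      rw [norm_smul, hw, mul_one, Complex.norm_real, Real.norm_eq_abs, sq_abs]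
    have h4 : ‖b‖ ^ 2 = φ 0 ^ 2 := by rw [h2, hnormx, h3]; ring
    have h5 : 0 ≤ φ 0 := (hphi_pos 0 (by omega)).le
    nlinarith [norm_nonneg b]
  constructor
  · refine ⟨b, hnormb, fun j => ?_⟩
    rw [hinner j, Complex.norm_real, Real.norm_eq_abs, abs_of_nonneg (hψnonneg _)]
  · rintro b' ⟨hb1, hb2⟩ hbS
    obtain ⟨c, hc⟩ := (Submodule.mem_span_range_iff_exists_fun ℂ).mp hbS
    have hcj : ∀ j : Fin (n - J), ‖c j‖ = ψ (j : ℕ) := by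
      intro j
      have := hb2 j
      rw [← hc, hv.inner_right_fintype] at this
      exact this
    have hnb : ‖b'‖ ^ 2 = φ 0 ^ 2 - φ (n - J) ^ 2 := by
      rw [← hc, norm_sum_sq_aux hv, ← htel]
      exact Finset.sum_congr rfl fun k _ => by rw [hcj k, hψsq _ k.isLt]
    rw [hb1] at hnb
    nlinarith
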